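/- Let G be the graph with vertex set T and edges {t't : t' ∈ A*_t}. Then G has no proper colouring c : T → ℕ, yet G admits a proper colouring by countable ordinals (so G is uncountably chromatic with chromatic number ℵ₁), and moreover every uncountable set of vertices of G contains two vertices that are connected by only finitely many pairwise internally disjoint paths in G. -/

import Mathlib

/-- An element of the tree `T`: an injective, co-infinite sequence `t : α → ℕ`
(with `ℕ = {1,2,3,…}`) of countable ordinal length `α`.  We encode such a
sequence as a total function `f : Ordinal → ℕ` taking a *positive* value
exactly on the ordinals `β < len` (the value `0` plays the role of
"undefined", which is harmless since the paper's `ℕ` starts at `1`). -/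
structure CSeq where
  /-- the length (domain) of the sequence, a countable ordinal -/
  len : Ordinal
  len_countable : len < Ordinal.omega 1
  /-- the sequence itself, with `f β = 0` meaning "β is outside the domain" -/
  f : Ordinal → ℕ
  dom_iff : ∀ β, β < len ↔ f β ≠ 0
  inj : ∀ β γ, β < len → γ < len → f β = f γ → β = γ
  coinf : {n : ℕ | n ≠ 0 ∧ n ∉ Set.range f}.Infinite

namespace CSeq

/-- the extension order on `T`: `s ≤ t` iff `s = t ↾ dom s`. -/
def Ext (s t : CSeq) : Prop := ∀ β, s.f β ≠ 0 → t.f β = s.f β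

/-- strict extension: `s < t`. -/
def ExtLt (s t : CSeq) : Prop := s.Ext t ∧ s ≠ t

/-- the image `im t ⊆ ℕ = {1,2,…}` of a sequence `t`. -/
def im (t : CSeq) : Set ℕ := {n | n ≠ 0 ∧ n ∈ Set.range t.f}

/-- `t ∈ Σ(T)`: the length of `t` is a successor ordinal. -/
def IsSucc (t : CSeq) : Prop := ∃ α, t.len = α + 1

/-- `last t`: the last value of a sequence (of successor length). -/
noncomputable def lastVal (t : CSeq) : ℕ := t.f (Ordinal.pred t.len)

/-- the restriction `t ↾ γ` of a sequence `t` to an initial segment `γ ≤ dom t`. -/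
noncomputable def restrict (t : CSeq) (γ : Ordinal) (h : γ ≤ t.len) : CSeq where
  len := γ
  len_countable := lt_of_le_of_lt h t.len_countable
  f := fun β => if β < γ then t.f β else 0
  dom_iff := by
    intro β
    constructor
    · intro hβ
      simpa [hβ] using (t.dom_iff β).1 (lt_of_lt_of_le hβ h)
    · intro hβ
      by_contra hc
      simp [hc] at hβ
  inj := by
    intro β γ' hβ hγ
    simp only [if_pos hβ, if_pos hγ]
    exact t.inj β γ' (lt_of_lt_of_le hβ h) (lt_of_lt_of_le hγ h)
  coinf := t.coinf.mono (by
    rintro n ⟨hn0, hn⟩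
    refine ⟨hn0, ?_⟩
    rintro ⟨β, hβ⟩
    by_cases hb : β < γ
    · exact hn ⟨β, by simpa [hb] using hβ⟩
    · simp only [if_neg hb] at hβ
      exact hn0 hβ.symm)

/-- `t* := t ↾ α` for `t` of successor length `α + 1`: the immediate
predecessor of `t` in the tree. -/
noncomputable def star (t : CSeq) : CSeq := t.restrict (Ordinal.pred t.len) (Ordinal.pred_le_self _)

/-- `A_t := {s ≤ t : s ∈ Σ(T), last s = min (im t \ im s*)}`. -/
def A (t : CSeq) : Set CSeq :=
  {s | s.Ext t ∧ s.IsSucc ∧ s.lastVal = sInf (t.im \ s.star.im)}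

/-- `A*_t := {s* : s ∈ A_t}`. -/
def Astar (t : CSeq) : Set CSeq := star '' A t

/-- the graph `G` with vertex set `T` and edges `{t't : t' ∈ A*_t}`. -/
def G : SimpleGraph CSeq := SimpleGraph.fromRel (fun t' t => t' ∈ Astar t)

/-- the graph `G'` with vertex set `T` and edges `{t't : t' ∈ A_t}`. -/
def G' : SimpleGraph CSeq := SimpleGraph.fromRel (fun t' t => t' ∈ A t)

/-- two `t`–`t'` paths are independent (internally disjoint) if they share no
vertices other than `t` and `t'`. -/
def InternallyDisjoint {t t' : CSeq} (p q : G.Path t t') : Prop :=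
  ∀ v, v ∈ p.1.support → v ∈ q.1.support → v = t ∨ v = t'

/-- `t'` is a `k`-extension of `t ∈ Σ(T)` if `t' > t` and every element of
`im t' \ im t` is greater than `a_{k+1}`, where `a_1 < … < a_{k+1}` are the
`k+1` smallest elements of `ℕ \ (im t ∪ [last t])`.  (Recall `Nat.nth p k` is
the `(k+1)`-st element of `{n | p n}` in increasing order.) -/
def IsKExt (k : ℕ) (t t' : CSeq) : Prop :=
  t.ExtLt t' ∧ ∀ n ∈ t'.im \ t.im,
    Nat.nth (fun m => m ∉ t.im ∧ t.lastVal < m) k < n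

end CSeq


/-! ### Auxiliary lemmas -/

namespace CSeq

universe u

theorem ext' {s t : CSeq} (hlen : s.len = t.len) (hf : s.f = t.f) : s = t := by
  cases s; cases t; simp_all

theorem f_ne_zero {t : CSeq} {β : Ordinal} (h : β < t.len) : t.f β ≠ 0 := (t.dom_iff β).1 h

theorem f_eq_zero {t : CSeq} {β : Ordinal} (h : ¬ β < t.len) : t.f β = 0 := by
  by_contra h'; exact h ((t.dom_iff β).2 h')

theorem lt_len {t : CSeq} {β : Ordinal} (h : t.f β ≠ 0) : β < t.len := (t.dom_iff β).2 h

theorem Ext.rfl {t : CSeq} : t.Ext t := fun _ _ => _root_.rfl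

theorem Ext.trans {s t u : CSeq} (h1 : s.Ext t) (h2 : t.Ext u) : s.Ext u := by
  intro β h
  rw [h2 β (by rw [h1 β h]; exact h), h1 β h]

theorem Ext.len_le {s t : CSeq} (h : s.Ext t) : s.len ≤ t.len := by
  by_contra hlt
  push_neg at hlt
  exact absurd (lt_len (show t.f t.len ≠ 0 by
    rw [h t.len (f_ne_zero hlt)]; exact f_ne_zero hlt)) (lt_irrefl _)

theorem Ext.f_eq {s t : CSeq} (h : s.Ext t) {β : Ordinal} (hβ : β < s.len) :
    t.f β = s.f β := h β (f_ne_zero hβ)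

theorem mem_im {t : CSeq} {n : ℕ} : n ∈ t.im ↔ n ≠ 0 ∧ ∃ β, t.f β = n := Iff.rfl

theorem fmem_im {t : CSeq} {β : Ordinal} (h : β < t.len) : t.f β ∈ t.im :=
  ⟨f_ne_zero h, β, _root_.rfl⟩

theorem Ext.im_subset {s t : CSeq} (h : s.Ext t) : s.im ⊆ t.im := by
  rintro n ⟨h0, β, hβ⟩
  exact ⟨h0, β, by rw [h β (hβ ▸ h0)]; exact hβ⟩

theorem Ext.eq_of_len {s t : CSeq} (h : s.Ext t) (hl : s.len = t.len) : s = t := by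
  refine ext' hl (funext fun β => ?_)
  by_cases hβ : β < s.len
  · exact (h.f_eq hβ).symm
  · rw [f_eq_zero hβ, f_eq_zero (hl ▸ hβ)]

theorem restrict_len (t : CSeq) (γ : Ordinal) (h : γ ≤ t.len) :
    (t.restrict γ h).len = γ := _root_.rfl

theorem restrict_f (t : CSeq) (γ : Ordinal) (h : γ ≤ t.len) (β : Ordinal) :
    (t.restrict γ h).f β = if β < γ then t.f β else 0 := _root_.rfl

theorem restrict_ext (t : CSeq) (γ : Ordinal) (h : γ ≤ t.len) : (t.restrict γ h).Ext t := by
  intro β hb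
  rw [restrict_f] at hb ⊢
  by_cases hβ : β < γ
  · rw [if_pos hβ]
  · rw [if_neg hβ] at hb; exact absurd _root_.rfl hb

theorem eq_restrict_of_ext {w v : CSeq} (h : w.Ext v) (hle : w.len ≤ v.len) :
    v.restrict w.len hle = w := by
  refine ext' _root_.rfl (funext fun β => ?_)
  rw [restrict_f]
  by_cases hβ : β < w.len
  · rw [if_pos hβ]; exact h.f_eq hβ
  · rw [if_neg hβ, f_eq_zero hβ]

theorem succ_le_len {v : CSeq} {γ : Ordinal} (h : γ < v.len) : γ + 1 ≤ v.len := by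
  rw [Ordinal.add_one_eq_succ]; exact Order.succ_le_of_lt h

theorem star_restrict_succ (v : CSeq) (γ : Ordinal) (h : γ + 1 ≤ v.len) :
    (v.restrict (γ + 1) h).star =
      v.restrict γ (le_trans (le_of_lt (by rw [Ordinal.add_one_eq_succ]; exact Order.lt_succ γ)) h) := by
  have hpred : Ordinal.pred (γ + 1) = γ := by
    rw [Ordinal.add_one_eq_succ, Ordinal.pred_succ]
  refine ext' ?_ (funext fun β => ?_)
  · show Ordinal.pred (γ + 1) = γ
    exact hpred
  · show (if β < Ordinal.pred ((v.restrict (γ+1) h).len) then (v.restrict (γ+1) h).f β else 0) = _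
    rw [restrict_len, hpred, restrict_f, restrict_f]
    by_cases hβ : β < γ
    · rw [if_pos hβ, if_pos hβ, if_pos (lt_of_lt_of_le hβ (le_of_lt (by
        rw [Ordinal.add_one_eq_succ]; exact Order.lt_succ γ)))]
    · rw [if_neg hβ, if_neg hβ]

/-- The key adjacency-construction lemma. -/
theorem adj_of_min {w v : CSeq} (hext : w.Ext v) (hlt : w.len < v.len)
    (hmin : v.f w.len = sInf (v.im \ w.im)) : G.Adj w v := by
  have hle : w.len + 1 ≤ v.len := succ_le_len hlt
  refine (SimpleGraph.fromRel_adj _ w v).2 ⟨?_, Or.inl ?_⟩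
  · intro he
    rw [he] at hlt
    exact lt_irrefl _ hlt
  · refine ⟨v.restrict (w.len + 1) hle, ⟨restrict_ext _ _ _, ⟨w.len, _root_.rfl⟩, ?_⟩, ?_⟩
    · -- lastVal condition
      rw [star_restrict_succ, eq_restrict_of_ext hext (le_of_lt hlt)]
      show (v.restrict (w.len+1) hle).f (Ordinal.pred ((w.len+1))) = _
      have hpred : Ordinal.pred (w.len + 1) = w.len := by
        rw [Ordinal.add_one_eq_succ, Ordinal.pred_succ]
      have hlt1 : w.len < w.len + 1 := by
        rw [Ordinal.add_one_eq_succ]; exact Order.lt_succ w.len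
      rw [hpred, restrict_f, if_pos hlt1]
      exact hmin
    · rw [star_restrict_succ, eq_restrict_of_ext hext (le_of_lt hlt)]

/-- Structure of members of `Astar`. -/
theorem astar_elim {x y : CSeq} (h : x ∈ Astar y) :
    x.Ext y ∧ x.len < y.len ∧ y.f x.len = sInf (y.im \ x.im) := by
  obtain ⟨s, ⟨hext, ⟨α, hα⟩, hlast⟩, rfl⟩ := h
  have hpred : Ordinal.pred s.len = α := by rw [hα, Ordinal.add_one_eq_succ, Ordinal.pred_succ]
  have hlenstar : s.star.len = α := by rw [star, restrict_len, hpred]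
  have hαlt : α < s.len := by
    rw [hα, Ordinal.add_one_eq_succ]; exact Order.lt_succ α
  have hstar_ext_s : s.star.Ext s := restrict_ext _ _ _
  have h1 : s.star.Ext y := hstar_ext_s.trans hext
  have h2 : s.star.len < y.len := by
    rw [hlenstar]; exact lt_of_lt_of_le hαlt hext.len_le
  refine ⟨h1, h2, ?_⟩
  have h3 : y.f s.star.len = s.lastVal := by
    rw [hlenstar, lastVal, hpred]
    exact hext.f_eq hαlt
  rw [h3, hlast]

theorem adj_iff {x y : CSeq} : G.Adj x y ↔ x ≠ y ∧ (x ∈ Astar y ∨ y ∈ Astar x) :=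
  SimpleGraph.fromRel_adj _ x y

end CSeq


/-! ### Part 3 machinery -/

namespace CSeq

universe u

/-- crossing lemma: a walk from a `Q`-vertex to a non-`Q`-vertex contains an edge
crossing the boundary. -/
theorem crossing {Q : CSeq → Prop} :
    ∀ {a b : CSeq} (W : G.Walk a b), Q a → ¬ Q b →
      ∃ v w, G.Adj v w ∧ Q v ∧ ¬ Q w ∧ w ∈ W.support := by
  intro a b W
  induction W with
  | nil => intro ha hb; exact absurd ha hb
  | @cons x y z h p ih =>
    intro ha hb
    by_cases hq : Q y
    · obtain ⟨v, w, h1, h2, h3, h4⟩ := ih hq hb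
      exact ⟨v, w, h1, h2, h3, by
        rw [SimpleGraph.Walk.support_cons]; exact List.mem_cons_of_mem _ h4⟩
    · exact ⟨x, y, h, ha, hq, by
        rw [SimpleGraph.Walk.support_cons]
        exact List.mem_cons_of_mem _ p.start_mem_support⟩

/-- Between two incomparable vertices there are only finitely many pairwise
internally disjoint paths. -/
theorem pathBound {t t' : CSeq} (hne : t ≠ t') (hnc1 : ¬ t.Ext t') (hnc2 : ¬ t'.Ext t) :
    ∀ P : Set (G.Path t t'),
      (∀ p ∈ P, ∀ q ∈ P, p ≠ q → InternallyDisjoint p q) → P.Finite := by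
  intro P hdisj
  -- the branching ordinal
  set S : Set Ordinal := {β | t.f β ≠ t'.f β} with hS
  have hSne : S.Nonempty := by
    by_contra hc
    rw [Set.not_nonempty_iff_eq_empty] at hc
    refine hnc1 (fun β _ => ?_)
    by_contra hb
    have : β ∈ S := fun h => hb h.symm
    rw [hc] at this; exact this
  set γ : Ordinal := sInf S with hγ
  have hγS : γ ∈ S := csInf_mem hSne
  have hbelow : ∀ β, β < γ → t.f β = t'.f β := by
    intro β hβ
    by_contra hb
    exact (notMem_of_lt_csInf hβ (OrderBot.bddBelow _)) hb
  have hγt : γ < t.len := by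
    by_contra hc
    refine hnc1 (fun β hb => ?_)
    have hβ : β < t.len := lt_len hb
    exact (hbelow β (lt_of_lt_of_le hβ (le_of_not_gt hc))).symm
  have hγt' : γ < t'.len := by
    by_contra hc
    refine hnc2 (fun β hb => ?_)
    have hβ : β < t'.len := lt_len hb
    exact (hbelow β (lt_of_lt_of_le hβ (le_of_not_gt hc)))
  set x : ℕ := t.f γ with hx
  have hx0 : x ≠ 0 := f_ne_zero hγt
  -- the side predicate
  set Q : CSeq → Prop := fun v => ∀ β, β ≤ γ → v.f β = t.f β with hQ
  have hQt : Q t := fun β _ => rfl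
  have hQt' : ¬ Q t' := by
    intro h
    exact hγS (h γ le_rfl).symm
  -- each path contains a low crossing vertex
  have key : ∀ p : G.Path t t', ∃ δ : Ordinal, ∃ h : δ ≤ t.len,
      δ ≤ γ ∧ t.restrict δ h ∈ p.1.support ∧ t.f δ ≤ x ∧ t.f δ ≠ 0 := by
    intro p
    obtain ⟨v, w, hadj, hQv, hQw, hwsup⟩ := crossing p.1 hQt hQt'
    have hγv : γ < v.len := lt_len (show v.f γ ≠ 0 by rw [hQv γ le_rfl]; exact hx0)
    obtain ⟨-, hcase⟩ := adj_iff.1 hadj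
    rcases hcase with hc | hc
    · -- v ∈ Astar w : impossible
      obtain ⟨hext, hlt, -⟩ := astar_elim hc
      exfalso
      refine hQw (fun β hβ => ?_)
      rw [hext.f_eq (lt_of_le_of_lt hβ hγv), hQv β hβ]
    · -- w ∈ Astar v
      obtain ⟨hext, hlt, hval⟩ := astar_elim hc
      have hwγ : w.len ≤ γ := by
        by_contra hcc
        push_neg at hcc
        refine hQw (fun β hβ => ?_)
        rw [← hext.f_eq (lt_of_le_of_lt hβ hcc), hQv β hβ]
      have hwfβ : ∀ β, β < w.len → w.f β = t.f β := by
        intro β hβ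
        rw [← hext.f_eq hβ, hQv β (le_trans (le_of_lt hβ) hwγ)]
      have hδt : w.len < t.len := lt_of_le_of_lt hwγ hγt
      refine ⟨w.len, le_of_lt hδt, hwγ, ?_, ?_, f_ne_zero hδt⟩
      · have : t.restrict w.len (le_of_lt hδt) = w := by
          refine ext' rfl (funext fun β => ?_)
          rw [restrict_f]
          by_cases hβ : β < w.len
          · rw [if_pos hβ, (hwfβ β hβ)]
          · rw [if_neg hβ, f_eq_zero hβ]
        rw [this]; exact hwsup
      · -- t.f w.len ≤ x
        have hfv : v.f w.len = t.f w.len := hQv w.len hwγ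
        have hxmem : x ∈ v.im := ⟨hx0, γ, hQv γ le_rfl⟩
        have hxnot : x ∉ w.im := by
          rintro ⟨h0, β, hβ⟩
          have hβw : β < w.len := lt_len (hβ ▸ h0)
          have : t.f β = t.f γ := by rw [← hwfβ β hβw, hβ]
          have hβγ : β = γ := t.inj β γ (lt_of_lt_of_le (lt_of_lt_of_le hβw hwγ) (le_of_lt hγt) |>.trans_le le_rfl) hγt this
          rw [hβγ] at hβw
          exact absurd hβw (not_lt_of_ge hwγ)
        calc t.f w.len = sInf (v.im \ w.im) := by rw [← hfv, hval]
          _ ≤ x := Nat.sInf_le ⟨hxmem, hxnot⟩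
  -- now bound
  classical
  set F : G.Path t t' → ℕ := fun p => t.f (key p).choose with hF
  have hFmem : ∀ p : G.Path t t', ∃ h : (key p).choose ≤ t.len,
      (key p).choose ≤ γ ∧ t.restrict (key p).choose h ∈ p.1.support ∧
        t.f (key p).choose ≤ x ∧ t.f (key p).choose ≠ 0 := fun p => (key p).choose_spec
  have hinj : Set.InjOn F P := by
    intro p hp q hq hpq
    by_contra hne'
    obtain ⟨hp1, hp2, hp3, hp4, hp5⟩ := hFmem p
    obtain ⟨hq1, hq2, hq3, hq4, hq5⟩ := hFmem q
    have hplen : (key p).choose < t.len := lt_of_le_of_lt hp2 hγt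
    have hqlen : (key q).choose < t.len := lt_of_le_of_lt hq2 hγt
    have hδeq : (key p).choose = (key q).choose := t.inj _ _ hplen hqlen hpq
    have hmem_q : t.restrict (key p).choose hp1 ∈ q.1.support := by
      rw [show t.restrict (key p).choose hp1 = t.restrict (key q).choose hq1 by
        congr 1]
      exact hq3
    rcases hdisj p hp q hq hne' _ hp3 hmem_q with h | h
    · have := congrArg CSeq.len h
      rw [restrict_len] at this
      rw [this] at hplen
      exact lt_irrefl _ hplen
    · have := congrArg CSeq.len h
      rw [restrict_len] at this
      rw [this] at hp2
      exact absurd hγt' (not_lt_of_ge hp2)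
  have himg : F '' P ⊆ Set.Iic x := by
    rintro n ⟨p, -, rfl⟩
    exact (hFmem p).choose_spec.2.2.1
  exact Set.Finite.of_finite_image ((Set.finite_Iic x).subset himg) hinj

/-- every uncountable set contains two incomparable elements. -/
theorem exists_incomp {A : Set CSeq} (hA : ¬ A.Countable) :
    ∃ t ∈ A, ∃ t' ∈ A, ¬ t.Ext t' ∧ ¬ t'.Ext t := by
  by_contra h
  push_neg at h
  have hcomp : ∀ t ∈ A, ∀ t' ∈ A, t.Ext t' ∨ t'.Ext t := by
    intro t ht t' ht'
    by_contra hb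
    push_neg at hb
    exact hb.2 (h t ht t' ht' hb.1)
  have heqlen : ∀ t ∈ A, ∀ t' ∈ A, t.len = t'.len → t = t' := by
    intro t ht t' ht' hl
    rcases hcomp t ht t' ht' with hc | hc
    · exact hc.eq_of_len hl
    · exact (hc.eq_of_len hl.symm).symm
  set Amax : Set CSeq := {t ∈ A | ∀ t' ∈ A, t'.len ≤ t.len} with hAmax
  set Anm : Set CSeq := A \ Amax with hAnm
  have hnext : ∀ t ∈ Anm, ∃ u, u ∈ A ∧ t.len < u.len ∧
      ∀ w ∈ A, t.len < w.len → u.len ≤ w.len := by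
    rintro t ⟨htA, htm⟩
    have : ∃ t' ∈ A, t.len < t'.len := by
      by_contra hc
      push_neg at hc
      exact htm ⟨htA, hc⟩
    obtain ⟨t', ht', hlt⟩ := this
    set SO : Set Ordinal := {o | ∃ u ∈ A, u.len = o ∧ t.len < o} with hSO
    have hSOne : SO.Nonempty := ⟨t'.len, t', ht', rfl, hlt⟩
    obtain ⟨u, huA, hueq, hult⟩ := csInf_mem hSOne
    exact ⟨u, huA, hueq ▸ hult, fun w hw hlw =>
      hueq ▸ csInf_le (OrderBot.bddBelow _) ⟨w, hw, rfl, hlw⟩⟩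
  classical
  choose U hUA hUlt hUmin using hnext
  have hExtU : ∀ t (ht : t ∈ Anm), t.Ext (U t ht) := by
    intro t ht
    rcases hcomp t ht.1 (U t ht) (hUA t ht) with hc | hc
    · exact hc
    · exact absurd (hUlt t ht) (not_lt_of_ge hc.len_le)
  have hne' : ∀ t (ht : t ∈ Anm), ((U t ht).im \ t.im).Nonempty := by
    intro t ht
    refine ⟨(U t ht).f t.len, fmem_im (hUlt t ht), ?_⟩
    rintro ⟨h0, β, hβ⟩
    have hβl : β < t.len := lt_len (hβ ▸ h0)
    have : (U t ht).f β = (U t ht).f t.len := by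
      rw [(hExtU t ht).f_eq hβl, hβ]
    have := (U t ht).inj β t.len (lt_of_lt_of_le hβl (hExtU t ht).len_le) (hUlt t ht) this
    rw [this] at hβl
    exact lt_irrefl _ hβl
  set f : CSeq → ℕ := fun t => if ht : t ∈ Anm then sInf ((U t ht).im \ t.im) else 0 with hf
  have hfmem : ∀ t (ht : t ∈ Anm), f t ∈ (U t ht).im \ t.im := by
    intro t ht
    rw [hf]
    simp only [dif_pos ht]
    exact Nat.sInf_mem (hne' t ht)
  have hasym : ∀ t (ht : t ∈ Anm), ∀ t' (ht' : t' ∈ Anm), t.len < t'.len → f t ≠ f t' := by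
    intro t ht t' ht' hlt heq
    have hUsub : (U t ht).im ⊆ t'.im := by
      rcases hcomp (U t ht) (hUA t ht) t' ht'.1 with hc | hc
      · exact hc.im_subset
      · have : (U t ht).len = t'.len :=
          le_antisymm (hUmin t ht t' ht'.1 hlt) hc.len_le
        rw [(hc.eq_of_len this.symm)]
    have h1 : f t ∈ t'.im := hUsub (hfmem t ht).1
    have h2 : f t' ∉ t'.im := (hfmem t' ht').2
    rw [heq] at h1
    exact h2 h1
  have hAnmc : Anm.Countable := by
    rw [Set.countable_iff_exists_injOn]
    refine ⟨f, fun t ht t' ht' heq => ?_⟩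
    by_contra hnee
    have hll : t.len ≠ t'.len := fun hl => hnee (heqlen t ht.1 t' ht'.1 hl)
    rcases lt_or_gt_of_ne hll with hl | hl
    · exact hasym t ht t' ht' hl heq
    · exact hasym t' ht' t ht hl heq.symm
  have hAmaxc : Amax.Countable := by
    refine Set.Subsingleton.countable (fun t ht u hu => ?_)
    exact heqlen t ht.1 u hu.1 (le_antisymm (hu.2 t ht.1) (ht.2 u hu.1))
  exact hA (((hAnmc.union hAmaxc).mono) (fun z hz => by
    by_cases hm : z ∈ Amax
    · exact Or.inr hm
    · exact Or.inl ⟨hz, hm⟩))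

end CSeq


/-! ### Part 1 machinery -/

namespace P1

open CSeq

universe u

noncomputable def emptySeq : CSeq where
  len := 0
  len_countable := Ordinal.omega_pos 1
  f := fun _ => 0
  dom_iff := by intro β; simp [not_lt_of_ge (zero_le (a := β))]
  inj := fun β γ h => absurd h (not_lt_of_ge (zero_le (a := β)))
  coinf := by
    have h : {n : ℕ | n ≠ 0 ∧ n ∉ Set.range (fun _ : Ordinal.{0} => (0 : ℕ))} = {(0:ℕ)}ᶜ := by
      ext n
      simp [Set.range_const]
    rw [h]
    exact (Set.finite_singleton 0).infinite_compl

variable (c : CSeq → ℕ)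

/-- the set of colours realized by extensions of `t` all of whose new values exceed `M`. -/
def Col (t : CSeq) (M : ℕ) : Set ℕ :=
  {j | ∃ s : CSeq, t.Ext s ∧ (∀ v ∈ s.im, v ∉ t.im → M < v) ∧ c s = j}

theorem self_mem_Col (t : CSeq) (M : ℕ) : c t ∈ Col c t M :=
  ⟨t, Ext.rfl, fun v hv hv' => absurd hv hv', rfl⟩

/-- appending one value to a sequence. -/
noncomputable def snoc (s : CSeq) (a : ℕ) (ha0 : a ≠ 0) (har : a ∉ Set.range s.f) :
    CSeq where
  len := s.len + 1
  len_countable := by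
    rw [Ordinal.add_one_eq_succ]
    exact (Cardinal.isSuccLimit_omega 1).succ_lt s.len_countable
  f := fun β => if β = s.len then a else s.f β
  dom_iff := by
    intro β
    beta_reduce
    have hsucc : s.len < s.len + 1 := by
      rw [Ordinal.add_one_eq_succ]; exact Order.lt_succ s.len
    by_cases hβ : β = s.len
    · subst hβ
      rw [if_pos rfl]
      exact iff_of_true hsucc ha0
    · rw [if_neg hβ, ← s.dom_iff β]
      constructor
      · intro h
        have : β ≤ s.len := by
          rw [Ordinal.add_one_eq_succ] at h; exact Order.lt_succ_iff.1 h
        exact lt_of_le_of_ne this hβ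
      · intro h
        exact lt_trans h hsucc
  inj := by
    intro β γ hβ hγ heq
    beta_reduce at heq
    have hsucc : ∀ δ : Ordinal, δ < s.len + 1 → δ ≠ s.len → δ < s.len := by
      intro δ h hne
      have : δ ≤ s.len := by
        rw [Ordinal.add_one_eq_succ] at h; exact Order.lt_succ_iff.1 h
      exact lt_of_le_of_ne this hne
    by_cases h1 : β = s.len <;> by_cases h2 : γ = s.len
    · rw [h1, h2]
    · rw [if_pos h1, if_neg h2] at heq
      exact absurd ⟨γ, heq.symm⟩ har
    · rw [if_neg h1, if_pos h2] at heq
      exact absurd ⟨β, heq⟩ har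
    · rw [if_neg h1, if_neg h2] at heq
      exact s.inj β γ (hsucc β hβ h1) (hsucc γ hγ h2) heq
  coinf := by
    refine (s.coinf.diff (Set.finite_singleton a)).mono ?_
    rintro n ⟨⟨h0, hr⟩, hna⟩
    simp only [Set.mem_singleton_iff] at hna
    refine ⟨h0, ?_⟩
    rintro ⟨β, hβ⟩
    beta_reduce at hβ
    by_cases hb : β = s.len
    · rw [if_pos hb] at hβ; exact hna hβ.symm
    · rw [if_neg hb] at hβ; exact hr ⟨β, hβ⟩

theorem snoc_lt_len (s : CSeq) (a : ℕ) (h0 : a ≠ 0) (hr : a ∉ Set.range s.f) :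
    s.len < (snoc s a h0 hr).len := by
  show s.len < s.len + 1
  rw [Ordinal.add_one_eq_succ]; exact Order.lt_succ s.len

theorem snoc_f_last (s : CSeq) (a : ℕ) (h0 : a ≠ 0) (hr : a ∉ Set.range s.f) :
    (snoc s a h0 hr).f s.len = a := if_pos rfl

theorem snoc_ext (s : CSeq) (a : ℕ) (h0 : a ≠ 0) (hr : a ∉ Set.range s.f) :
    s.Ext (snoc s a h0 hr) := by
  intro β hβ
  have : β ≠ s.len := fun h => hβ (by rw [h]; exact f_eq_zero (lt_irrefl _))
  show (if β = s.len then a else s.f β) = s.f β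
  rw [if_neg this]

theorem mem_im_snoc {s : CSeq} {a : ℕ} {h0 : a ≠ 0} {hr : a ∉ Set.range s.f} {v : ℕ}
    (h : v ∈ (snoc s a h0 hr).im) : v = a ∨ v ∈ s.im := by
  obtain ⟨hv0, β, hβ⟩ := h
  have hβ' : (if β = s.len then a else s.f β) = v := hβ
  by_cases hb : β = s.len
  · left; rw [if_pos hb] at hβ'; exact hβ'.symm
  · right; rw [if_neg hb] at hβ'; exact ⟨hv0, β, hβ'⟩

/-- the data produced at each step of the construction. -/
structure Step (t : CSeq) (M : ℕ) (j : ℕ) where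
  t' : CSeq
  M' : ℕ
  s : CSeq
  a : ℕ
  b : ℕ
  ext : t.Ext t'
  new_gt : ∀ v ∈ t'.im, v ∉ t.im → M < v
  M_lt : M < M'
  cs : c s = j
  sext : s.Ext t'
  slen : s.len < t'.len
  fa : t'.f s.len = a
  a_im_not : a ∉ s.im
  a_le : a ≤ M'
  a_min : ∀ v ∈ t'.im, v ∉ s.im → a ≤ v
  b_im_not : b ∉ t'.im
  b_gt : M < b
  b_le : b ≤ M'

theorem step_ex (t : CSeq) (M j : ℕ) (hj : j ∈ Col c t M) : Nonempty (Step c t M j) := by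
  obtain ⟨s, hts, hnew, hcs⟩ := hj
  obtain ⟨a, ⟨ha0, har⟩, haM⟩ := s.coinf.exists_gt M
  set t' := snoc s a ha0 har with ht'
  obtain ⟨b, ⟨hb0, hbr⟩, hbM⟩ := t'.coinf.exists_gt (max M a)
  refine ⟨⟨t', max a b, s, a, b, hts.trans (snoc_ext s a ha0 har), ?_, 
    lt_of_lt_of_le haM (le_max_left a b), hcs, snoc_ext s a ha0 har,
    snoc_lt_len s a ha0 har, snoc_f_last s a ha0 har,
    fun hm => har hm.2, le_max_left a b, ?_,
    fun hm => hbr hm.2, lt_of_le_of_lt (le_max_left M a) hbM,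
    le_max_right a b⟩⟩
  · intro v hv hvt
    rcases mem_im_snoc hv with h | h
    · rw [h]; exact haM
    · exact hnew v h hvt
  · intro v hv hvs
    rcases mem_im_snoc hv with h | h
    · rw [h]
    · exact absurd h hvs

noncomputable def stepC (t : CSeq) (M j : ℕ) (hj : j ∈ Col c t M) : Step c t M j :=
  (step_ex c t M j hj).some

open Classical in
noncomputable def pick (t : CSeq) (M : ℕ) (cap : Set ℕ) : ℕ :=
  if _ : ∃ j, j ∈ Col c t M ∧ j ∉ cap then sInf {j | j ∈ Col c t M ∧ j ∉ cap} else c t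

theorem pick_mem (t : CSeq) (M : ℕ) (cap : Set ℕ) : pick c t M cap ∈ Col c t M := by
  unfold pick
  split_ifs with h
  · exact (Nat.sInf_mem (h : {j | j ∈ Col c t M ∧ j ∉ cap}.Nonempty)).1
  · exact self_mem_Col c t M

theorem pick_least (t : CSeq) (M : ℕ) (cap : Set ℕ)
    (h : ∃ j, j ∈ Col c t M ∧ j ∉ cap) :
    pick c t M cap ∉ cap ∧ ∀ j, j ∈ Col c t M → j ∉ cap → pick c t M cap ≤ j := by
  unfold pick
  rw [dif_pos h]
  exact ⟨(Nat.sInf_mem (h : {j | j ∈ Col c t M ∧ j ∉ cap}.Nonempty)).2,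
    fun j h1 h2 => Nat.sInf_le ⟨h1, h2⟩⟩

noncomputable def run : ℕ → CSeq × ℕ × Set ℕ
  | 0 => (emptySeq, 0, ∅)
  | n + 1 =>
    let p := run n
    let j := pick c p.1 p.2.1 p.2.2
    let S := stepC c p.1 p.2.1 j (pick_mem c p.1 p.2.1 p.2.2)
    (S.t', S.M', insert j p.2.2)

noncomputable def tn (n : ℕ) : CSeq := (run c n).1
noncomputable def Mn (n : ℕ) : ℕ := (run c n).2.1
noncomputable def cap (n : ℕ) : Set ℕ := (run c n).2.2
noncomputable def jn (n : ℕ) : ℕ := pick c (tn c n) (Mn c n) (cap c n)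
noncomputable def Sn (n : ℕ) : Step c (tn c n) (Mn c n) (jn c n) :=
  stepC c (tn c n) (Mn c n) (jn c n) (pick_mem c (tn c n) (Mn c n) (cap c n))

theorem run_succ (n : ℕ) :
    run c (n + 1) = ((Sn c n).t', (Sn c n).M', insert (jn c n) (cap c n)) := rfl

theorem tn_succ (n : ℕ) : tn c (n + 1) = (Sn c n).t' := by
  show (run c (n+1)).1 = _; rw [run_succ]

theorem Mn_succ (n : ℕ) : Mn c (n + 1) = (Sn c n).M' := by
  show (run c (n+1)).2.1 = _; rw [run_succ]

theorem cap_succ (n : ℕ) : cap c (n + 1) = insert (jn c n) (cap c n) := by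
  show (run c (n+1)).2.2 = _; rw [run_succ]

theorem cap_zero : cap c 0 = ∅ := rfl

theorem ext_succ (n : ℕ) : (tn c n).Ext (tn c (n + 1)) := by
  rw [tn_succ]; exact (Sn c n).ext

theorem ext_le {m n : ℕ} (h : m ≤ n) : (tn c m).Ext (tn c n) := by
  induction n with
  | zero => rw [Nat.le_zero.1 h]; exact Ext.rfl
  | succ n ih =>
    rcases Nat.lt_succ_iff_lt_or_eq.1 (Nat.lt_succ_of_le h) with h' | h'
    · exact (ih (Nat.lt_succ_iff.1 h')).trans (ext_succ c n)
    · rw [h']; exact Ext.rfl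

theorem Mn_lt_succ (n : ℕ) : Mn c n < Mn c (n + 1) := by
  rw [Mn_succ]; exact (Sn c n).M_lt

theorem Mn_mono {m n : ℕ} (h : m ≤ n) : Mn c m ≤ Mn c n := by
  induction n with
  | zero => rw [Nat.le_zero.1 h]
  | succ n ih =>
    rcases Nat.lt_succ_iff_lt_or_eq.1 (Nat.lt_succ_of_le h) with h' | h'
    · exact le_trans (ih (Nat.lt_succ_iff.1 h')) (le_of_lt (Mn_lt_succ c n))
    · rw [h']

theorem new_gt {m n : ℕ} (h : m ≤ n) : ∀ v ∈ (tn c n).im, v ∉ (tn c m).im → Mn c m < v := by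
  induction n with
  | zero =>
    rw [Nat.le_zero.1 h]
    intro v hv hnv
    exact absurd hv hnv
  | succ n ih =>
    rcases Nat.lt_succ_iff_lt_or_eq.1 (Nat.lt_succ_of_le h) with h' | h'
    · intro v hv hnv
      have hmn : m ≤ n := Nat.lt_succ_iff.1 h'
      by_cases hv' : v ∈ (tn c n).im
      · exact ih hmn v hv' hnv
      · have : Mn c n < v := by
          have := (Sn c n).new_gt v (by rwa [← tn_succ]) hv'
          exact this
        exact lt_of_le_of_lt (Mn_mono c hmn) this
    · rw [h']
      intro v hv hnv
      exact absurd hv hnv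

theorem agree {m n : ℕ} {β : Ordinal.{0}} (hm : (tn c m).f β ≠ 0) (hn : (tn c n).f β ≠ 0) :
    (tn c m).f β = (tn c n).f β := by
  rcases le_total m n with h | h
  · exact (ext_le c h β hm).symm
  · exact ext_le c h β hn

open Classical in
noncomputable def tlim : CSeq where
  len := ⨆ n, (tn c n).len
  len_countable := by
    have h' : ∀ n, (tn c n).len < (Cardinal.aleph 1).ord := by
      intro n; rw [Cardinal.ord_aleph]; exact (tn c n).len_countable
    have h := Ordinal.iSup_lt_ord_lift ?_ h'
    · rwa [Cardinal.ord_aleph] at h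
    · rw [Cardinal.isRegular_aleph_one.cof_eq]
      simp only [Cardinal.mk_nat, Cardinal.lift_aleph0]
      exact Cardinal.aleph0_lt_aleph_one
  f := fun β => if h : ∃ n, (tn c n).f β ≠ 0 then (tn c h.choose).f β else 0
  dom_iff := by
    intro β
    beta_reduce
    by_cases h : ∃ n, (tn c n).f β ≠ 0
    · rw [dif_pos h]
      refine iff_of_true ?_ h.choose_spec
      obtain ⟨n, hn⟩ := h
      exact lt_of_lt_of_le (lt_len hn) (Ordinal.le_iSup (fun n => (tn c n).len) n)
    · rw [dif_neg h]
      push_neg at h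
      refine iff_of_false ?_ (by simp)
      intro hβ
      obtain ⟨n, hn⟩ := Ordinal.lt_iSup_iff.mp hβ
      exact f_ne_zero hn (h n)
  inj := by
    intro β γ hβ hγ heq
    obtain ⟨n1, hn1⟩ := Ordinal.lt_iSup_iff.mp hβ
    obtain ⟨n2, hn2⟩ := Ordinal.lt_iSup_iff.mp hγ
    have hb : β < (tn c (max n1 n2)).len :=
      lt_of_lt_of_le hn1 (ext_le c (le_max_left n1 n2)).len_le
    have hg : γ < (tn c (max n1 n2)).len :=
      lt_of_lt_of_le hn2 (ext_le c (le_max_right n1 n2)).len_le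
    have h1 : ∃ n, (tn c n).f β ≠ 0 := ⟨_, f_ne_zero hb⟩
    have h2 : ∃ n, (tn c n).f γ ≠ 0 := ⟨_, f_ne_zero hg⟩
    beta_reduce at heq
    rw [dif_pos h1, dif_pos h2] at heq
    have e1 : (tn c h1.choose).f β = (tn c (max n1 n2)).f β :=
      agree c h1.choose_spec (f_ne_zero hb)
    have e2 : (tn c h2.choose).f γ = (tn c (max n1 n2)).f γ :=
      agree c h2.choose_spec (f_ne_zero hg)
    exact (tn c (max n1 n2)).inj β γ hb hg (by rw [← e1, ← e2, heq])
  coinf := by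
    have hmono : StrictMono (fun n => (Sn c n).b) := by
      apply strictMono_nat_of_lt_succ
      intro n
      exact lt_of_le_of_lt (le_trans (Sn c n).b_le (le_of_eq (Mn_succ c n).symm))
        (Sn c (n+1)).b_gt
    refine (Set.infinite_range_of_injective hmono.injective).mono ?_
    rintro _ ⟨n, rfl⟩
    have hb0 : (Sn c n).b ≠ 0 := (Nat.lt_of_le_of_lt (Nat.zero_le _) (Sn c n).b_gt).ne'
    refine ⟨hb0, ?_⟩
    rintro ⟨β, hβ⟩
    beta_reduce at hβ
    by_cases h : ∃ m, (tn c m).f β ≠ 0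
    · rw [dif_pos h] at hβ
      set m := h.choose with hm
      have hmem : (Sn c n).b ∈ (tn c m).im := ⟨hb0, β, hβ⟩
      have hnot1 : (Sn c n).b ∉ (tn c (n+1)).im := by
        rw [tn_succ]; exact (Sn c n).b_im_not
      rcases le_total m (n+1) with hle | hle
      · exact hnot1 ((ext_le c hle).im_subset hmem)
      · have := new_gt c hle (Sn c n).b hmem hnot1
        rw [Mn_succ] at this
        exact absurd (Sn c n).b_le (not_le_of_gt this)
    · rw [dif_neg h] at hβ
      exact hb0 hβ.symm

open Classical in
theorem tlim_f_eq {n : ℕ} {β : Ordinal.{0}} (h : (tn c n).f β ≠ 0) :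
    (tlim c).f β = (tn c n).f β := by
  have hex : ∃ m, (tn c m).f β ≠ 0 := ⟨n, h⟩
  show (if h' : ∃ m, (tn c m).f β ≠ 0 then (tn c h'.choose).f β else 0) = _
  rw [dif_pos hex]
  exact agree c hex.choose_spec h

theorem ext_lim (n : ℕ) : (tn c n).Ext (tlim c) := fun _ h => tlim_f_eq c h

open Classical in
theorem lim_new_gt (k : ℕ) : ∀ v ∈ (tlim c).im, v ∉ (tn c k).im → Mn c k < v := by
  rintro v ⟨h0, β, hβ⟩ hnot
  have h : ∃ m, (tn c m).f β ≠ 0 := by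
    by_contra hc
    have : (tlim c).f β = 0 := by
      show (if h' : ∃ m, (tn c m).f β ≠ 0 then (tn c h'.choose).f β else 0) = 0
      rw [dif_neg hc]
    rw [hβ] at this
    exact h0 this
  have hval : (tn c h.choose).f β = v := by
    have := tlim_f_eq c h.choose_spec
    rw [← this, hβ]
  have hmem : v ∈ (tn c h.choose).im := ⟨h0, β, hval⟩
  rcases le_total h.choose k with hle | hle
  · exact absurd ((ext_le c hle).im_subset hmem) hnot
  · exact new_gt c hle v hmem hnot

theorem lim_mem_Col (n : ℕ) : c (tlim c) ∈ Col c (tn c n) (Mn c n) :=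
  ⟨tlim c, ext_lim c n, fun v hv hnv => lim_new_gt c n v hv hnv, rfl⟩

theorem stage_adj (n : ℕ) : G.Adj (Sn c n).s (tlim c) := by
  have hext1 : (Sn c n).s.Ext (tn c (n+1)) := by rw [tn_succ]; exact (Sn c n).sext
  have hsext : (Sn c n).s.Ext (tlim c) := hext1.trans (ext_lim c (n+1))
  have hslen1 : (Sn c n).s.len < (tn c (n+1)).len := by rw [tn_succ]; exact (Sn c n).slen
  have hslen : (Sn c n).s.len < (tlim c).len :=
    lt_of_lt_of_le hslen1 (ext_lim c (n+1)).len_le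
  have hfa1 : (tn c (n+1)).f (Sn c n).s.len = (Sn c n).a := by
    rw [tn_succ]; exact (Sn c n).fa
  have ha0 : (Sn c n).a ≠ 0 := by
    rw [← hfa1]; exact f_ne_zero hslen1
  have hfa : (tlim c).f (Sn c n).s.len = (Sn c n).a := by
    rw [tlim_f_eq c (hfa1 ▸ ha0 : (tn c (n+1)).f (Sn c n).s.len ≠ 0)]
    exact hfa1
  refine adj_of_min hsext hslen ?_
  rw [hfa]
  have hamem : (Sn c n).a ∈ (tlim c).im \ (Sn c n).s.im :=
    ⟨⟨ha0, _, hfa⟩, (Sn c n).a_im_not⟩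
  refine le_antisymm (le_csInf ⟨_, hamem⟩ ?_) (Nat.sInf_le hamem)
  rintro v ⟨hv, hvs⟩
  by_cases hv1 : v ∈ (tn c (n+1)).im
  · refine (Sn c n).a_min v ?_ hvs
    rwa [← tn_succ]
  · have := lim_new_gt c (n+1) v hv hv1
    rw [Mn_succ] at this
    exact le_of_lt (lt_of_le_of_lt (Sn c n).a_le this)

theorem mem_cap {m n : ℕ} (h : m < n) : jn c m ∈ cap c n := by
  induction n with
  | zero => exact absurd h (Nat.not_lt_zero m)
  | succ n ih =>
    rw [cap_succ]
    rcases Nat.lt_succ_iff_lt_or_eq.1 h with h' | h'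
    · exact Set.mem_insert_of_mem _ (ih h')
    · rw [h']; exact Set.mem_insert _ _

theorem part1 (hc : ∀ t t' : CSeq, G.Adj t t' → c t ≠ c t') : False := by
  have hne : ∀ n, jn c n ≠ c (tlim c) := by
    intro n h
    exact hc _ _ (stage_adj c n) (by rw [(Sn c n).cs, h])
  set i := c (tlim c) with hi
  have hinotcap : ∀ n, i ∉ cap c n := by
    intro n
    induction n with
    | zero => rw [cap_zero]; exact Set.notMem_empty i
    | succ n ih =>
      rw [cap_succ]
      rintro (h | h)
      · exact hne n h.symm
      · exact ih h
  have hex : ∀ n, ∃ j, j ∈ Col c (tn c n) (Mn c n) ∧ j ∉ cap c n :=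
    fun n => ⟨i, lim_mem_Col c n, hinotcap n⟩
  have hjle : ∀ n, jn c n ≤ i :=
    fun n => (pick_least c _ _ _ (hex n)).2 i (lim_mem_Col c n) (hinotcap n)
  have hjnot : ∀ n, jn c n ∉ cap c n := fun n => (pick_least c _ _ _ (hex n)).1
  have hinj : Function.Injective (jn c) := by
    intro m n h
    by_contra hmn
    rcases lt_or_gt_of_ne hmn with hlt | hlt
    · exact hjnot n (h ▸ mem_cap c hlt)
    · exact hjnot m (h.symm ▸ mem_cap c hlt)
  exact (Set.infinite_range_of_injective hinj)
    ((Set.finite_Iic i).subset (by rintro _ ⟨n, rfl⟩; exact hjle n))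

end P1


/-! ### transferring the length to an arbitrary universe -/

namespace P2

open CSeq

universe u

/-- the ordering of the image of `t` induced by the positions. -/
def nrel (t : CSeq) : {n : ℕ // n ∈ t.im} → {n : ℕ // n ∈ t.im} → Prop :=
  fun x y => ∃ β γ : Ordinal.{0}, t.f β = x.1 ∧ t.f γ = y.1 ∧ β < γ

noncomputable def posEquiv (t : CSeq) :
    {o' : Ordinal.{0} | o' < t.len} ≃ {n : ℕ // n ∈ t.im} := by
  refine Equiv.ofBijective (fun x => ⟨t.f x.1, fmem_im x.2⟩) ⟨?_, ?_⟩
  · rintro ⟨β, hβ⟩ ⟨γ, hγ⟩ h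
    have : t.f β = t.f γ := congrArg Subtype.val h
    exact Subtype.ext (t.inj β γ hβ hγ this)
  · rintro ⟨n, h0, β, hβ⟩
    exact ⟨⟨β, lt_len (hβ ▸ h0)⟩, Subtype.ext hβ⟩

instance subrel_iwo (t : CSeq) :
    IsWellOrder (Subtype {o' : Ordinal.{0} | o' < t.len}) (Subrel (· < ·) {o' : Ordinal.{0} | o' < t.len}) :=
  inferInstanceAs (IsWellOrder _ (Subrel (· < ·) (fun o' : Ordinal.{0} => o' < t.len)))

noncomputable def posIso (t : CSeq) :
    @Subrel Ordinal.{0} (· < ·) {o' : Ordinal.{0} | o' < t.len} ≃r nrel t := by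
  refine ⟨posEquiv t, ?_⟩
  rintro ⟨β, hβ⟩ ⟨γ, hγ⟩
  show nrel t ⟨t.f β, _⟩ ⟨t.f γ, _⟩ ↔ β < γ
  constructor
  · rintro ⟨β', γ', h1, h2, hlt⟩
    have hβ' : β' < t.len := lt_len (h1 ▸ f_ne_zero hβ)
    have hγ' : γ' < t.len := lt_len (h2 ▸ f_ne_zero hγ)
    rw [t.inj β' β hβ' hβ h1, t.inj γ' γ hγ' hγ h2] at hlt
    exact hlt
  · intro h
    exact ⟨β, γ, rfl, rfl, h⟩

instance nrel_iwo (t : CSeq) : IsWellOrder {n : ℕ // n ∈ t.im} (nrel t) :=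
  (posIso t).symm.toRelEmbedding.isWellOrder

theorem len_eq_of_type_eq {t t' : CSeq}
    (h : Ordinal.type (nrel t) = Ordinal.type (nrel t')) : t.len = t'.len := by
  obtain ⟨e⟩ := Ordinal.type_eq.1 h
  have e2 := (posIso t).trans (e.trans (posIso t').symm)
  have h2 := e2.ordinal_type_eq
  haveI := subrel_iwo t
  haveI := subrel_iwo t'
  rw [show Ordinal.type (Subrel (· < ·) {o' : Ordinal.{0} | o' < t.len}) = Ordinal.lift.{1} t.len from Ordinal.typein_ordinal t.len,
    show Ordinal.type (Subrel (· < ·) {o' : Ordinal.{0} | o' < t'.len}) = Ordinal.lift.{1} t'.len from Ordinal.typein_ordinal t'.len] at h2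
  exact Ordinal.lift_inj.1 h2

universe v

theorem type_lt_omega1 (t : CSeq) :
    Ordinal.lift.{v} (Ordinal.type (nrel t)) < Ordinal.omega 1 := by
  rw [← Cardinal.ord_aleph, Cardinal.lt_ord, ← Ordinal.lift_card, Ordinal.card_type]
  refine lt_of_le_of_lt ?_ Cardinal.aleph0_lt_aleph_one
  calc Cardinal.lift.{v} (Cardinal.mk {n : ℕ // n ∈ t.im})
      ≤ Cardinal.lift.{v} Cardinal.aleph0 := Cardinal.lift_le.2 Cardinal.mk_le_aleph0
    _ = Cardinal.aleph0 := Cardinal.lift_aleph0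

end P2

open CSeq in
/-- The graph `G` has no proper colouring `c : T → ℕ`, yet
admits a proper colouring by countable ordinals (so `G` is uncountably
chromatic, of chromatic number `ℵ₁`); moreover every uncountable set of
vertices contains two vertices connected by only finitely many pairwise
internally disjoint paths in `G`. -/
theorem stmt12 :
    (¬ ∃ c : CSeq → ℕ, ∀ t t' : CSeq, G.Adj t t' → c t ≠ c t') ∧
    (∃ c : CSeq → {o : Ordinal // o < Ordinal.omega 1},
      ∀ t t' : CSeq, G.Adj t t' → c t ≠ c t') ∧
    ∀ A : Set CSeq, ¬ A.Countable →
      ∃ t ∈ A, ∃ t' ∈ A, t ≠ t' ∧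
        ∀ P : Set (G.Path t t'),
          (∀ p ∈ P, ∀ q ∈ P, p ≠ q → InternallyDisjoint p q) → P.Finite := by
  refine ⟨?_, ?_, ?_⟩
  · rintro ⟨c, hc⟩
    exact P1.part1 c hc
  · refine ⟨fun t => ⟨Ordinal.lift.{_} (Ordinal.type (P2.nrel t)), P2.type_lt_omega1 t⟩, ?_⟩
    intro t t' hadj heq
    have hl0 : Ordinal.lift.{_} (Ordinal.type (P2.nrel t)) =
        Ordinal.lift.{_} (Ordinal.type (P2.nrel t')) := congrArg Subtype.val heq
    have hl : t.len = t'.len := P2.len_eq_of_type_eq (Ordinal.lift_inj.1 hl0)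
    obtain ⟨hne, hcase⟩ := adj_iff.1 hadj
    rcases hcase with h | h
    · exact absurd hl (ne_of_lt (astar_elim h).2.1)
    · exact absurd hl.symm (ne_of_lt (astar_elim h).2.1)
  · intro A hA
    obtain ⟨t, ht, t', ht', h1, h2⟩ := exists_incomp hA
    exact ⟨t, ht, t', ht', fun h => h1 (by rw [h]; exact Ext.rfl), pathBound
      (fun h => h1 (by rw [h]; exact Ext.rfl)) h1 h2⟩
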